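/- Let n and l be positive integers, let V = ℂ^l, and let T_l : ℂ[S_n] → End(V^{⊗n}) be the algebra homomorphism extending T_l(π)(v₁⊗⋯⊗v_n) = v_{π(1)}⊗⋯⊗v_{π(n)}. Then: (a) if l ≥ n, T_l is injective on the group algebra ℂ[S_n]; (b) if l < n, then for every permutation π ∈ S_n and every subset S ⊆ {1,…,n} with |S| > l, one has T_l(π·E_S) = 0, where E_S = Σ_{σ} sgn(σ)·σ, the sum being over all permutations σ ∈ S_n fixing every element of the complement of S. -/

import Mathlib

open scoped TensorProduct

noncomputable section

/-- `E_S`: the signed sum `Σ_σ sgn(σ)·σ` in the group algebra `ℂ[S_n]`, over all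
permutations `σ` fixing every element outside `S`. -/
def ES {n : ℕ} (S : Finset (Fin n)) : MonoidAlgebra ℂ (Equiv.Perm (Fin n)) :=
  ∑ σ ∈ Finset.univ.filter (fun σ : Equiv.Perm (Fin n) => ∀ x ∉ S, σ x = x),
    ((Equiv.Perm.sign σ : ℤ) : ℂ) • MonoidAlgebra.of ℂ (Equiv.Perm (Fin n)) σ

namespace TlAux

variable {n l : ℕ}

/-- The evaluation multilinear functional `v ↦ ∏ i, v i (f i)`. -/
def φ (f : Fin n → Fin l) : MultilinearMap ℂ (fun _ : Fin n => Fin l → ℂ) ℂ :=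
  (MultilinearMap.mkPiAlgebra ℂ (Fin n) ℂ).compLinearMap (fun i => LinearMap.proj (f i))

lemma φ_apply (f : Fin n → Fin l) (v : Fin n → Fin l → ℂ) :
    φ f v = ∏ i, v i (f i) := by
  simp [φ]

end TlAux

/-- Let `T_l : ℂ[S_n] → End((ℂ^l)^{⊗n})` be the linear map with
`T_l(π)(v₁⊗⋯⊗v_n) = v_{π(1)}⊗⋯⊗v_{π(n)}`.  Then (a) if `l ≥ n`, `T_l` is injective;
(b) if `l < n`, then `T_l(π·E_S) = 0` for every `π ∈ S_n` and every `S` with `|S| > l`. -/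
theorem Tl_injective_and_kernel (n l : ℕ) (hn : 0 < n) (hl : 0 < l)
    (T : MonoidAlgebra ℂ (Equiv.Perm (Fin n)) →ₗ[ℂ]
      Module.End ℂ (⨂[ℂ] _ : Fin n, (Fin l → ℂ)))
    (hT : ∀ (π : Equiv.Perm (Fin n)) (v : Fin n → (Fin l → ℂ)),
      T (MonoidAlgebra.of ℂ (Equiv.Perm (Fin n)) π) (PiTensorProduct.tprod ℂ v) =
        PiTensorProduct.tprod ℂ (fun i => v (π i))) :
    (l ≥ n → Function.Injective T) ∧
    (l < n → ∀ (π : Equiv.Perm (Fin n)) (S : Finset (Fin n)), l < S.card →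
      T (MonoidAlgebra.of ℂ (Equiv.Perm (Fin n)) π * ES S) = 0) := by
  classical
  -- A general expansion of `T a` applied to a pure tensor.
  have expand : ∀ (a : MonoidAlgebra ℂ (Equiv.Perm (Fin n))) (w : Fin n → Fin l → ℂ),
      T a (PiTensorProduct.tprod ℂ w)
        = a.coeff.sum fun π c => c • PiTensorProduct.tprod ℂ (fun i => w (π i)) := by
    intro a w
    have ha : a = a.coeff.sum fun π c => c • MonoidAlgebra.of ℂ (Equiv.Perm (Fin n)) π := by
      conv_lhs => rw [← MonoidAlgebra.sum_coeff_single a]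
      refine Finsupp.sum_congr fun π _ => ?_
      simp [MonoidAlgebra.of_apply, MonoidAlgebra.smul_single']
    conv_lhs => rw [ha]
    rw [map_finsuppSum, Finsupp.sum, LinearMap.coe_sum, Finset.sum_apply, Finsupp.sum]
    refine Finset.sum_congr rfl fun π _ => ?_
    rw [map_smul, LinearMap.smul_apply, hT]
  constructor
  · -- Part (a): injectivity when `l ≥ n`
    intro hln
    suffices h0 : ∀ a, T a = 0 → a = 0 by
      intro a b hab
      have := h0 (a - b) (by rw [map_sub, hab, sub_self])
      exact sub_eq_zero.mp this
    intro a ha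
    ext π₀
    have hinj : Function.Injective (Fin.castLE hln) := Fin.castLE_injective hln
    set e : Fin n → Fin l → ℂ := fun i => Pi.single (Fin.castLE hln i) 1 with he
    have key : T a (PiTensorProduct.tprod ℂ e) = 0 := by rw [ha]; rfl
    rw [expand] at key
    have key2 := congrArg (PiTensorProduct.lift (TlAux.φ (fun i => Fin.castLE hln (π₀ i)))) key
    rw [map_finsuppSum, map_zero] at key2
    simp only [map_smul, PiTensorProduct.lift.tprod, TlAux.φ_apply, smul_eq_mul] at key2
    rw [Finsupp.sum] at key2
    have hval : ∀ π : Equiv.Perm (Fin n),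
        (∏ i, e (π i) (Fin.castLE hln (π₀ i))) = if π = π₀ then 1 else 0 := by
      intro π
      by_cases h : π = π₀
      · subst h
        simp [he]
      · have : ∃ i, π i ≠ π₀ i := by
          by_contra hc
          push_neg at hc
          exact h (Equiv.ext hc)
        obtain ⟨i, hi⟩ := this
        rw [if_neg h]
        refine Finset.prod_eq_zero (Finset.mem_univ i) ?_
        have : Fin.castLE hln (π i) ≠ Fin.castLE hln (π₀ i) := fun hc => hi (hinj hc)
        simp [he, Pi.single_eq_of_ne this.symm]
    have : ∑ π ∈ a.coeff.support, a.coeff π * ∏ i, e (π i) (Fin.castLE hln (π₀ i)) = a.coeff π₀ := by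
      rw [Finset.sum_eq_single π₀]
      · rw [hval, if_pos rfl, mul_one]
      · intro b _ hb
        rw [hval, if_neg hb, mul_zero]
      · intro h
        rw [Finsupp.notMem_support_iff.mp h, zero_mul]
    rw [this] at key2
    simpa using key2
  · -- Part (b)
    intro hln π S hS
    set F := Finset.univ.filter (fun σ : Equiv.Perm (Fin n) => ∀ x ∉ S, σ x = x) with hF
    have hmul : MonoidAlgebra.of ℂ (Equiv.Perm (Fin n)) π * ES S
        = ∑ σ ∈ F, ((Equiv.Perm.sign σ : ℤ) : ℂ)
            • MonoidAlgebra.of ℂ (Equiv.Perm (Fin n)) (π * σ) := by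
      rw [ES, Finset.mul_sum]
      refine Finset.sum_congr rfl fun σ _ => ?_
      rw [mul_smul_comm, ← map_mul]
    rw [hmul]
    refine PiTensorProduct.ext ?_
    refine Module.Basis.ext_multilinear (fun _ => Pi.basisFun ℂ (Fin l)) fun f => ?_
    simp only [LinearMap.compMultilinearMap_apply, LinearMap.zero_apply, map_sum,
      LinearMap.coe_sum, Finset.sum_apply, map_smul, LinearMap.smul_apply, hT]
    set v : Fin n → Fin l → ℂ := fun i => Pi.basisFun ℂ (Fin l) (f i) with hv
    -- pigeonhole: two elements of S with the same value of `f ∘ π`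
    obtain ⟨x, hxS, y, hyS, hxy, hfxy⟩ :=
      Finset.exists_ne_map_eq_of_card_lt_of_maps_to
        (t := (Finset.univ : Finset (Fin l))) (by simpa using hS)
        (f := fun z => f (π z)) (fun a _ => Finset.mem_univ _)
    have hvπ : ∀ z, v (π (Equiv.swap x y z)) = v (π z) := by
      intro z
      rcases eq_or_ne z x with rfl | hzx
      · rw [Equiv.swap_apply_left, hv]; simp [hfxy]
      rcases eq_or_ne z y with rfl | hzy
      · rw [Equiv.swap_apply_right, hv]; simp [hfxy]
      · rw [Equiv.swap_apply_of_ne_of_ne hzx hzy]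
    refine Finset.sum_involution (fun σ _ => Equiv.swap x y * σ) ?_ ?_ ?_ ?_
    · intro σ _
      have hsign : ((Equiv.Perm.sign (Equiv.swap x y * σ) : ℤ) : ℂ)
          = -((Equiv.Perm.sign σ : ℤ) : ℂ) := by
        rw [Equiv.Perm.sign_mul, Equiv.Perm.sign_swap hxy]
        push_cast
        ring
      have htp : PiTensorProduct.tprod ℂ (fun i => v ((π * (Equiv.swap x y * σ)) i))
          = PiTensorProduct.tprod ℂ (fun i => v ((π * σ) i)) := by
        congr 1
        funext i
        simp only [Equiv.Perm.mul_apply]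
        exact hvπ (σ i)
      rw [htp, hsign, neg_smul]
      exact add_neg_cancel _
    · intro σ _ _ h
      have := congrArg (fun τ : Equiv.Perm (Fin n) => τ (σ⁻¹ x)) h
      simp only [Equiv.Perm.mul_apply, show σ (σ⁻¹ x) = x by rw [← Equiv.Perm.mul_apply, mul_inv_cancel, Equiv.Perm.one_apply]] at this
      rw [Equiv.swap_apply_left] at this
      exact hxy this.symm
    · intro σ hσ
      simp only [hF, Finset.mem_filter, Finset.mem_univ, true_and] at hσ ⊢
      intro z hz
      have hzx : z ≠ x := fun h => hz (h ▸ hxS)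
      have hzy : z ≠ y := fun h => hz (h ▸ hyS)
      rw [Equiv.Perm.mul_apply, hσ z hz, Equiv.swap_apply_of_ne_of_ne hzx hzy]
    · intro σ _
      rw [← mul_assoc, Equiv.swap_mul_self, one_mul]
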